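/- Define Qf : (1, 4/3) → ℝ by Qf(c) = 16(c−1)√(c(c−1)) + (8/3)(c−1)(4−3c)·ln((3c − 2 + 3√(c(c−1)))/√(4 − 3c)). Then Qf is differentiable on (1, 4/3) and its derivative is Qf′(c) = 28√(c(c−1)) + (8/3)(7−6c)·ln((3c − 2 + 3√(c(c−1)))/√(4 − 3c)). -/

import Mathlib

open Real Set

/-- The closed-form charge
`Qf(c) = 16(c−1)√(c(c−1)) + (8/3)(c−1)(4−3c)·log((3c−2+3√(c(c−1)))/√(4−3c))`
is differentiable on `(1, 4/3)` with derivative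
`Qf′(c) = 28√(c(c−1)) + (8/3)(7−6c)·log((3c−2+3√(c(c−1)))/√(4−3c))`. -/
theorem stmt17 :
    ∀ c ∈ Ioo (1:ℝ) (4/3),
      HasDerivAt (fun c : ℝ => 16*(c-1)*sqrt (c*(c-1))
          + (8/3)*(c-1)*(4-3*c)*log ((3*c - 2 + 3*sqrt (c*(c-1)))/sqrt (4 - 3*c)))
        (28*sqrt (c*(c-1))
          + (8/3)*(7-6*c)*log ((3*c - 2 + 3*sqrt (c*(c-1)))/sqrt (4 - 3*c))) c := by
  rintro c ⟨hc1, hc2⟩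
  have hcc : 0 < c*(c-1) := mul_pos (by linarith) (by linarith)
  have h4 : 0 < 4 - 3*c := by linarith
  set s := sqrt (c*(c-1)) with hsdef
  set t := sqrt (4-3*c) with htdef
  clear_value s t
  have hs0 : 0 < s := hsdef ▸ sqrt_pos.mpr hcc
  have ht0 : 0 < t := htdef ▸ sqrt_pos.mpr h4
  have hs : s^2 = c*(c-1) := hsdef ▸ sq_sqrt hcc.le
  have ht : t^2 = 4-3*c := htdef ▸ sq_sqrt h4.le
  have hN : (0:ℝ) < 3*c-2+3*s := by linarith
  have hid := hasDerivAt_id c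
  have hp : HasDerivAt (fun x : ℝ => x*(x-1)) (2*c-1) c := by
    have h := hid.mul (hid.sub_const 1)
    convert h using 1 <;> first | rfl | (simp only [id_eq]; ring) | ring | (funext x; simp only [id_eq, Pi.mul_apply]; ring)
  have hS : HasDerivAt (fun x : ℝ => sqrt (x*(x-1))) ((2*c-1)/(2*s)) c := by
    have h := hp.sqrt hcc.ne'
    rw [← hsdef] at h
    exact h
  have hq : HasDerivAt (fun x : ℝ => 4-3*x) (-3) c := by
    have h := (hid.const_mul (3:ℝ)).const_sub 4
    convert h using 1 <;> first | rfl | (simp only [id_eq]; ring) | ring | (funext x; simp only [id_eq, Pi.mul_apply]; ring)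
  have hT : HasDerivAt (fun x : ℝ => sqrt (4-3*x)) (-3/(2*t)) c := by
    have h := hq.sqrt h4.ne'
    rw [← htdef] at h
    exact h
  have hNum : HasDerivAt (fun x : ℝ => 3*x-2+3*sqrt (x*(x-1)))
      (3+3*((2*c-1)/(2*s))) c := by
    have h := ((hid.const_mul (3:ℝ)).sub_const 2).add (hS.const_mul 3)
    convert h using 1 <;> first | rfl | (simp only [id_eq]; ring) | ring | (funext x; simp only [id_eq, Pi.mul_apply]; ring)
  have ht0' : sqrt (4-3*c) ≠ 0 := by rw [← htdef]; exact ht0.ne'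
  have hN' : 3*c - 2 + 3*sqrt (c*(c-1)) ≠ 0 := by rw [← hsdef]; exact hN.ne'
  have hDiv := hNum.div hT ht0'
  have hLog := hDiv.log (div_ne_zero hN' ht0')
  have hP : HasDerivAt (fun x : ℝ => (8/3)*(x-1)*(4-3*x)) ((8/3)*(7-6*c)) c := by
    have h := ((hid.sub_const 1).const_mul ((8:ℝ)/3)).mul hq
    convert h using 1 <;> first | rfl | (simp only [id_eq]; ring) | ring | (funext x; simp only [id_eq, Pi.mul_apply]; ring)
  have hsum := (((hid.sub_const 1).const_mul (16:ℝ)).mul hS).add (hP.mul hLog)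
  convert hsum using 1
  · rfl
  · rfl
  · rfl
  simp only [id_eq, Pi.div_apply]
  rw [← hsdef, ← htdef]
  have hkey : (((3+3*((2*c-1)/(2*s)))*t - (3*c-2+3*s)*(-3/(2*t)))/t^2)/((3*c-2+3*s)/t)
      = (6-3*c)/(2*s*t^2) := by
    field_simp
    linear_combination 9*hs + (3*(2*s+2*c-1))*ht
  rw [hkey, ht]
  set L := log ((3*c-2+3*s)/t) with hL
  clear_value L
  field_simp
  linear_combination 72*hs
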